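/- Let U be a finite set, W ⊆ U with |W| = k, and f : U → {1,…,k} a coloring such that W intersects exactly ℓ color classes, where for each color i the set W ∩ f⁻¹(i) has size cᵢ. Suppose each color class A_i = f⁻¹(i) ∩ A (for some A ⊇ W) is independently partitioned uniformly at random into two parts of sizes differing by at most 1. Then the probability that, for every color i, all elements of W of color i lie in the same part, is at most (1/2)^(k−ℓ). -/

import Mathlib

open Finset

set_option maxHeartbeats 1000000

section Aux
lemma chooseIncr (n j : ℕ) (h : 2*(j+1) ≤ n+1) : n.choose j ≤ n.choose (j+1) := by
  rcases Nat.lt_or_ge (2*(j+1)) (n+1) with h' | h'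
  · exact Nat.choose_le_succ_of_lt_half_left (by omega)
  · have hj : j = n - (j+1) := by omega
    nth_rewrite 1 [hj]
    exact (Nat.choose_symm (show j+1 ≤ n by omega)).le
lemma chooseDecr (n j : ℕ) (h : n+1 ≤ 2*(j+1)) : n.choose (j+1) ≤ n.choose j := by
  rcases Nat.lt_or_ge n (j+1) with h' | h'
  · simp [Nat.choose_eq_zero_of_lt h']
  · have e1 : n.choose (j+1) = n.choose (n - (j+1)) := (Nat.choose_symm h').symm
    have e2 : n.choose j = n.choose (n - j) := (Nat.choose_symm (by omega)).symm
    have e3 : n - j = (n - (j+1)) + 1 := by omega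
    rw [e1, e2, e3]
    exact chooseIncr _ _ (by omega)
lemma chooseIncr' (n i j : ℕ) (hij : i + 1 = j) (h : 2*j ≤ n+1) : n.choose i ≤ n.choose j := by
  subst hij; exact chooseIncr n i h
lemma chooseDecr' (n i j : ℕ) (hij : i + 1 = j) (h : n+1 ≤ 2*j) : n.choose j ≤ n.choose i := by
  subst hij; exact chooseDecr n i h
lemma pascal (n s : ℕ) (hs : 1 ≤ s) : (n+1).choose s = n.choose (s-1) + n.choose s := by
  obtain ⟨t, rfl⟩ : ∃ t, s = t+1 := ⟨s-1, by omega⟩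
  simp [Nat.choose_succ_succ]

def Gnum (a c s : ℕ) : ℕ := (if c ≤ s then (a - c).choose (s - c) else 0) + (a - c).choose s

lemma Gstep (a c s : ℕ) (hc : 1 ≤ c) (hca : c + 1 ≤ a) (h1 : 2*s ≤ a+1) (h2 : a ≤ 2*s+1) :
    2 * Gnum a (c+1) s ≤ Gnum a c s := by
  have hs : 1 ≤ s := by omega
  set n := a - c - 1 with hn
  have hac1 : a - (c+1) = n := by omega
  have hac : a - c = n + 1 := by omega
  unfold Gnum
  rw [hac1, hac]
  have hps : (n+1).choose s = n.choose (s-1) + n.choose s := pascal n s hs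
  have hdecr : n.choose s ≤ n.choose (s-1) := chooseDecr' n (s-1) s (by omega) (by omega)
  rcases Nat.lt_or_ge s c with hlt | hge
  · rw [if_neg (by omega), if_neg (by omega)]
    simp only [zero_add]
    rw [hps, two_mul]
    omega
  · rcases Nat.lt_or_ge s (c+1) with heq | hge1
    · rw [if_neg (by omega), if_pos hge]
      have h0 : s - c = 0 := by omega
      rw [h0]
      simp only [Nat.choose_zero_right]
      rw [hps, two_mul]
      omega
    · rw [if_pos (by omega), if_pos hge]
      have hpsc : (n+1).choose (s-c) = n.choose (s-c-1) + n.choose (s-c) := by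
        rw [pascal n (s-c) (by omega)]
      have e1 : s - (c+1) = s - c - 1 := by omega
      rw [e1, hpsc, hps]
      have i1 : n.choose (s-c-1) ≤ n.choose (s-c) :=
        chooseIncr' n (s-c-1) (s-c) (by omega) (by omega)
      omega

lemma Gmain (a c s : ℕ) (hc : 1 ≤ c) (hca : c ≤ a) (h1 : 2*s ≤ a+1) (h2 : a ≤ 2*s+1) :
    2^(c-1) * Gnum a c s ≤ a.choose s := by
  induction c with
  | zero => omega
  | succ c ih =>
    rcases Nat.eq_or_lt_of_le hc with h1c | h1c
    · -- c + 1 = 1, i.e. c = 0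
      have hc0 : c = 0 := by omega
      subst hc0
      unfold Gnum
      norm_num
      rcases Nat.eq_or_lt_of_le (show 0 ≤ s by omega) with hs0 | hs0
      · rw [if_neg (by omega)]
        simp [← hs0]
      · rw [if_pos (by omega)]
        have ha1 : a = (a-1) + 1 := by omega
        rw [ha1, pascal (a-1) s (by omega)]
        simp only [Nat.add_sub_cancel]
        omega
    · have hc1 : 1 ≤ c := by omega
      have := ih hc1 (by omega)
      have hstep := Gstep a c s hc1 hca h1 h2
      calc 2^(c+1-1) * Gnum a (c+1) s = 2^(c-1) * (2 * Gnum a (c+1) s) := by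
            rw [← mul_assoc, ← pow_succ]
            congr 1
            congr 1
            omega
      _ ≤ 2^(c-1) * Gnum a c s := Nat.mul_le_mul_left _ hstep
      _ ≤ a.choose s := this

variable {U : Type*} [DecidableEq U]

lemma count_disj (A W : Finset U) (hWA : W ⊆ A) (s : ℕ) :
    (A.powerset.filter fun S => S.card = s ∧ Disjoint W S).card = (A.card - W.card).choose s := by
  have he : (A.powerset.filter fun S => S.card = s ∧ Disjoint W S) = (A \ W).powersetCard s := by
    ext S
    simp only [mem_filter, mem_powerset, mem_powersetCard, subset_sdiff]
    constructor
    · rintro ⟨h1, h2, h3⟩; exact ⟨⟨h1, h3.symm⟩, h2⟩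
    · rintro ⟨⟨h1, h3⟩, h2⟩; exact ⟨h1, h2, h3.symm⟩
  rw [he, card_powersetCard, card_sdiff_of_subset hWA]

lemma count_sub (A W : Finset U) (hWA : W ⊆ A) (s : ℕ) :
    (A.powerset.filter fun S => S.card = s ∧ W ⊆ S).card
      = if W.card ≤ s then (A.card - W.card).choose (s - W.card) else 0 := by
  split_ifs with h
  · rw [← card_sdiff_of_subset hWA, ← card_powersetCard]
    apply card_nbij' (fun S => S \ W) (fun T => T ∪ W)
    · intro S hS
      simp only [Finset.mem_coe, mem_filter, mem_powerset] at hS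
      obtain ⟨h1, h2, h3⟩ := hS
      simp only [Finset.mem_coe, mem_powersetCard]
      exact ⟨sdiff_subset_sdiff h1 le_rfl, by rw [card_sdiff_of_subset h3, h2]⟩
    · intro T hT
      simp only [Finset.mem_coe, mem_powersetCard, subset_sdiff] at hT
      obtain ⟨⟨h1, hd⟩, h2⟩ := hT
      simp only [Finset.mem_coe, mem_filter, mem_powerset]
      refine ⟨union_subset h1 hWA, ?_, subset_union_right⟩
      rw [card_union_of_disjoint hd, h2]
      omega
    · intro S hS
      simp only [Finset.mem_coe, mem_filter, mem_powerset] at hS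
      exact sdiff_union_of_subset hS.2.2
    · intro T hT
      simp only [Finset.mem_coe, mem_powersetCard, subset_sdiff] at hT
      exact union_sdiff_cancel_right hT.1.2
  · rw [card_eq_zero, filter_eq_empty_iff]
    rintro S hS ⟨h1, h2⟩
    exact h ((card_le_card h2).trans_eq h1)


lemma per_s (A W : Finset U) (hWA : W ⊆ A) (hne : W.Nonempty) (s : ℕ)
    (h1 : 2*s ≤ A.card+1) (h2 : A.card ≤ 2*s+1) :
    2^(W.card - 1) * (A.powerset.filter fun S => S.card = s ∧ (W ⊆ S ∨ Disjoint W S)).card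
      ≤ (A.powerset.filter fun S => S.card = s).card := by
  have hT : (A.powerset.filter fun S => S.card = s).card = A.card.choose s := by
    rw [← powersetCard_eq_filter, card_powersetCard]
  have hsplit : (A.powerset.filter fun S => S.card = s ∧ (W ⊆ S ∨ Disjoint W S))
      = (A.powerset.filter fun S => S.card = s ∧ W ⊆ S)
        ∪ (A.powerset.filter fun S => S.card = s ∧ Disjoint W S) := by
    rw [← filter_or]
    apply filter_congr
    intro S _
    tauto
  have hdisj : Disjoint (A.powerset.filter fun S => S.card = s ∧ W ⊆ S)
      (A.powerset.filter fun S => S.card = s ∧ Disjoint W S) := by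
    rw [disjoint_left]
    intro S hS1 hS2
    simp only [mem_filter] at hS1 hS2
    have := hS2.2.2.mono_right hS1.2.2
    rw [disjoint_self] at this
    exact hne.ne_empty (by simpa using this)
  rw [hsplit, card_union_of_disjoint hdisj, hT, count_sub A W hWA s, count_disj A W hWA s]
  exact Gmain A.card W.card s hne.card_pos (card_le_card hWA) h1 h2

lemma per_color (A W : Finset U) (hWA : W ⊆ A) (hne : W.Nonempty) :
    2^(W.card-1) * (A.powerset.filter fun S =>
        (S.card = A.card/2 ∨ S.card = A.card - A.card/2) ∧ (W ⊆ S ∨ Disjoint W S)).card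
      ≤ (A.powerset.filter fun S => S.card = A.card/2 ∨ S.card = A.card - A.card/2).card := by
  have hm1 : 2*(A.card/2) ≤ A.card+1 := by omega
  have hm2 : A.card ≤ 2*(A.card/2)+1 := by omega
  have hm1' : 2*(A.card - A.card/2) ≤ A.card+1 := by omega
  have hm2' : A.card ≤ 2*(A.card - A.card/2)+1 := by omega
  by_cases hea : A.card/2 = A.card - A.card/2
  · simp only [← hea, or_self]
    exact per_s A W hWA hne _ hm1 hm2
  · have hnum : (A.powerset.filter fun S =>
        (S.card = A.card/2 ∨ S.card = A.card - A.card/2) ∧ (W ⊆ S ∨ Disjoint W S)).card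
      = (A.powerset.filter fun S => S.card = A.card/2 ∧ (W ⊆ S ∨ Disjoint W S)).card
        + (A.powerset.filter fun S => S.card = A.card - A.card/2 ∧ (W ⊆ S ∨ Disjoint W S)).card := by
      simp only [or_and_right]
      rw [filter_or]
      apply card_union_of_disjoint
      rw [disjoint_left]
      intro S hS1 hS2
      simp only [mem_filter] at hS1 hS2
      exact hea (hS1.2.1.symm.trans hS2.2.1)
    have hden : (A.powerset.filter fun S => S.card = A.card/2 ∨ S.card = A.card - A.card/2).card
      = (A.powerset.filter fun S => S.card = A.card/2).card
        + (A.powerset.filter fun S => S.card = A.card - A.card/2).card := by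
      rw [filter_or]
      apply card_union_of_disjoint
      rw [disjoint_left]
      intro S hS1 hS2
      simp only [mem_filter] at hS1 hS2
      exact hea (hS1.2.symm.trans hS2.2)
    rw [hnum, hden, Nat.mul_add]
    exact Nat.add_le_add (per_s A W hWA hne _ hm1 hm2) (per_s A W hWA hne _ hm1' hm2')

end Aux

/-- Let W ⊆ A ⊆ U with |W| = k, f : U → Fin k a colouring, and suppose W
intersects exactly ℓ colour classes.  Each colour class Aᵢ = A ∩ f⁻¹(i) is independently
partitioned uniformly at random into two parts (Xᵢ, Aᵢ \\ Xᵢ) whose sizes differ by at most 1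
(so |Xᵢ| ∈ {⌊|Aᵢ|/2⌋, ⌈|Aᵢ|/2⌉}).  The probability that, for every colour i, all elements of
W of colour i lie in the same part — which by independence and uniformity equals the ratio of
the number of favourable tuples of parts to the total number of tuples of parts — is at most
(1/2)^(k−ℓ). -/
theorem stmt_0 {U : Type*} [Fintype U] [DecidableEq U] (k ℓ : ℕ) (f : U → Fin k)
    (W A : Finset U) (hWA : W ⊆ A) (hWcard : W.card = k)
    (hℓ : (Finset.univ.filter fun i : Fin k => ∃ w ∈ W, f w = i).card = ℓ) :
    ((∏ i : Fin k,
        (((A.filter fun u => f u = i).powerset.filter fun S =>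
          (S.card = (A.filter fun u => f u = i).card / 2 ∨
            S.card = (A.filter fun u => f u = i).card - (A.filter fun u => f u = i).card / 2) ∧
          ((W.filter fun u => f u = i) ⊆ S ∨ Disjoint (W.filter fun u => f u = i) S)).card : ℝ)) /
      ∏ i : Fin k,
        (((A.filter fun u => f u = i).powerset.filter fun S =>
          S.card = (A.filter fun u => f u = i).card / 2 ∨
            S.card = (A.filter fun u => f u = i).card - (A.filter fun u => f u = i).card / 2).card : ℝ))
      ≤ ((1 : ℝ) / 2) ^ (k - ℓ) := by
  classical
  set Ai := fun i : Fin k => A.filter fun u => f u = i with hAi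
  set Wi := fun i : Fin k => W.filter fun u => f u = i with hWi
  set F : Fin k → ℕ := fun i => ((Ai i).powerset.filter fun S =>
      (S.card = (Ai i).card / 2 ∨ S.card = (Ai i).card - (Ai i).card / 2) ∧
      ((Wi i) ⊆ S ∨ Disjoint (Wi i) S)).card with hF
  set T : Fin k → ℕ := fun i => ((Ai i).powerset.filter fun S =>
      S.card = (Ai i).card / 2 ∨ S.card = (Ai i).card - (Ai i).card / 2).card with hT
  have hWiAi : ∀ i, Wi i ⊆ Ai i := fun i => filter_subset_filter _ hWA
  have hTpos : ∀ i, 0 < T i := by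
    intro i
    obtain ⟨S₀, hS₀, hc⟩ := Finset.exists_subset_card_eq (s := Ai i) (n := (Ai i).card / 2) (Nat.div_le_self _ _)
    refine card_pos.mpr ⟨S₀, ?_⟩
    simp only [mem_filter, mem_powerset]
    exact ⟨hS₀, Or.inl hc⟩
  have hFT : ∀ i, ¬ (Wi i).Nonempty → F i = T i := by
    intro i h
    rw [not_nonempty_iff_eq_empty] at h
    simp only [hF, hT, h]
    congr 1
    apply filter_congr
    intro S _
    simp [empty_subset]
  have hkey : ∀ i, (Wi i).Nonempty → 2^((Wi i).card - 1) * F i ≤ T i := fun i h =>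
    per_color (Ai i) (Wi i) (hWiAi i) h
  -- real bound per i
  have hreal : ∀ i ∈ (univ : Finset (Fin k)),
      (F i : ℝ) ≤ ((1:ℝ)/2)^((Wi i).card - 1) * (T i : ℝ) := by
    intro i _
    by_cases h : (Wi i).Nonempty
    · have hk := hkey i h
      have h2 : (0:ℝ) < 2^((Wi i).card - 1) := by positivity
      rw [one_div, inv_pow, inv_mul_eq_div, le_div_iff₀ h2, mul_comm]
      exact_mod_cast hk
    · rw [hFT i h]
      have : (Wi i).card = 0 := by
        rw [not_nonempty_iff_eq_empty] at h; simp [h]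
      simp [this]
  have hprod : (∏ i, (F i : ℝ)) ≤ ∏ i, ((1:ℝ)/2)^((Wi i).card - 1) * (T i : ℝ) := by
    apply prod_le_prod (fun i _ => (F i).cast_nonneg) hreal
  have hsum : ∑ i, ((Wi i).card - 1) = k - ℓ := by
    set H := (Finset.univ.filter fun i : Fin k => ∃ w ∈ W, f w = i) with hH
    have hmem : ∀ i, i ∈ H ↔ (Wi i).Nonempty := by
      intro i
      simp only [hH, mem_filter, mem_univ, true_and, hWi, filter_nonempty_iff]
    have h0 : ∀ i ∉ H, (Wi i).card = 0 := by
      intro i hi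
      rw [hmem] at hi
      rw [not_nonempty_iff_eq_empty] at hi
      simp [hi]
    have e1 : ∑ i, ((Wi i).card - 1) = ∑ i ∈ H, ((Wi i).card - 1) := by
      symm
      apply sum_subset (subset_univ H)
      intro i _ hi
      rw [h0 i hi]
      rfl
    have e2 : ∑ i ∈ H, (Wi i).card = ∑ i, (Wi i).card := by
      apply sum_subset (subset_univ H)
      intro i _ hi
      exact h0 i hi
    have e3 : ∑ i, (Wi i).card = k := by
      exact (card_eq_sum_card_fiberwise (fun x (_ : x ∈ W) => mem_univ (f x))).symm.trans hWcard
    have e4 : ∑ i ∈ H, ((Wi i).card - 1) + H.card = ∑ i ∈ H, (Wi i).card := by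
      rw [card_eq_sum_ones H, ← sum_add_distrib]
      apply sum_congr rfl
      intro i hi
      have : (Wi i).Nonempty := (hmem i).mp hi
      have := card_pos.mpr this
      omega
    have hHc : H.card = ℓ := hℓ
    omega
  have hTprod : (0:ℝ) < ∏ i, (T i : ℝ) :=
    prod_pos fun i _ => by exact_mod_cast hTpos i
  rw [div_le_iff₀ hTprod]
  calc (∏ i, (F i : ℝ)) ≤ ∏ i, ((1:ℝ)/2)^((Wi i).card - 1) * (T i : ℝ) := hprod
  _ = (∏ i, ((1:ℝ)/2)^((Wi i).card - 1)) * ∏ i, (T i : ℝ) := prod_mul_distrib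
  _ = ((1:ℝ)/2)^(∑ i, ((Wi i).card - 1)) * ∏ i, (T i : ℝ) := by
        rw [prod_pow_eq_pow_sum]
  _ = ((1:ℝ)/2)^(k-ℓ) * ∏ i, (T i : ℝ) := by rw [hsum]
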